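/- Let S ⊆ ℤ^d be a finitely generated subsemigroup with S - S = ℤ^d and S ≠ ℤ^d, a the sum of generators, and L_k := (S + k•a) \ (S + (k+1)•a) for k ≥ 0. Then the sets L_k (k ≥ 0) are pairwise disjoint and their union is S. -/

import Mathlib

theorem stmt_4 (d r : ℕ) (S : AddSubmonoid (Fin d → ℤ)) (e : Fin r → (Fin d → ℤ))
    (hgen : S = AddSubmonoid.closure (Set.range e))
    (hgrp : ∀ x : Fin d → ℤ, ∃ s ∈ S, ∃ t ∈ S, x = s - t)
    (hne : (S : Set (Fin d → ℤ)) ≠ Set.univ)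
    (a : Fin d → ℤ) (ha : a = ∑ i, e i)
    (L : ℕ → Set (Fin d → ℤ))
    (hL : ∀ k : ℕ, L k = (fun s => s + k • a) '' (S : Set (Fin d → ℤ)) \
        (fun s => s + (k + 1) • a) '' (S : Set (Fin d → ℤ))) :
    Pairwise (Function.onFun Disjoint L) ∧ (⋃ k : ℕ, L k) = (S : Set (Fin d → ℤ)) := by
  -- membership of images
  have hmem : ∀ (k : ℕ) (x : Fin d → ℤ),
      x ∈ (fun s => s + k • a) '' (S : Set (Fin d → ℤ)) ↔ x - k • a ∈ S := by
    intro k x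
    constructor
    · rintro ⟨s, hs, rfl⟩; simpa using hs
    · intro h; exact ⟨x - k • a, h, by simp⟩
  have haS : a ∈ S := by
    rw [hgen, ha]
    exact AddSubmonoid.sum_mem _ fun i _ =>
      AddSubmonoid.subset_closure (Set.mem_range_self i)
  -- key: every element of S is dominated by a multiple of a
  have key : ∀ t ∈ S, ∃ k : ℕ, k • a - t ∈ S := by
    intro t ht
    rw [hgen] at ht
    induction ht using AddSubmonoid.closure_induction with
    | mem x hx =>
      obtain ⟨i, rfl⟩ := hx
      refine ⟨1, ?_⟩
      have : (1 : ℕ) • a - e i = ∑ j ∈ Finset.univ.erase i, e j := by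
        rw [one_smul, ha, ← Finset.add_sum_erase _ _ (Finset.mem_univ i)]
        abel
      rw [this, hgen]
      exact AddSubmonoid.sum_mem _ fun j _ =>
        AddSubmonoid.subset_closure (Set.mem_range_self j)
    | zero => exact ⟨0, by simpa using S.zero_mem⟩
    | add x y hx hy ihx ihy =>
      obtain ⟨k, hk⟩ := ihx
      obtain ⟨k', hk'⟩ := ihy
      refine ⟨k + k', ?_⟩
      have : (k + k') • a - (x + y) = (k • a - x) + (k' • a - y) := by
        rw [add_nsmul]; abel
      rw [this]
      exact S.add_mem hk hk'
  -- no element survives all translates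
  have hnoinf : ∀ x : Fin d → ℤ, ¬ (∀ k : ℕ, x - k • a ∈ S) := by
    intro x hx
    apply hne
    ext z
    simp only [Set.mem_univ, iff_true]
    obtain ⟨s, hs, t, ht, hz⟩ := hgrp (z - x)
    obtain ⟨k, hk⟩ := key t ht
    have : z = (x - k • a) + s + (k • a - t) := by
      have hz' : z = x + (s - t) := by rw [← hz]; abel
      rw [hz']; abel
    rw [this]
    exact S.add_mem (S.add_mem (hx k) hs) hk
  -- S + (j) a ⊆ S + (k) a when k ≤ j
  have hmono : ∀ k j : ℕ, k ≤ j → ∀ x, x - j • a ∈ S → x - k • a ∈ S := by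
    intro k j hkj x hx
    have : x - k • a = (x - j • a) + (j - k) • a := by
      rw [sub_nsmul a hkj]; abel
    rw [this]
    exact S.add_mem hx (AddSubmonoid.nsmul_mem _ haS _)
  constructor
  · intro k j hkj
    rw [Function.onFun, Set.disjoint_left]
    intro x hxk hxj
    rw [hL k] at hxk
    rw [hL j] at hxj
    rcases hkj.lt_or_gt with h | h
    · exact hxk.2 ((hmem _ _).mpr (hmono (k+1) j h x ((hmem _ _).mp hxj.1)))
    · exact hxj.2 ((hmem _ _).mpr (hmono (j+1) k h x ((hmem _ _).mp hxk.1)))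
  · ext x
    simp only [Set.mem_iUnion]
    constructor
    · rintro ⟨k, hk⟩
      rw [hL k] at hk
      have := (hmem k x).mp hk.1
      simpa using hmono 0 k (Nat.zero_le k) x this
    · intro hx
      have : DecidablePred fun k : ℕ => ¬ x - k • a ∈ S := fun k => Classical.dec _
      have hex : ∃ k : ℕ, ¬ x - k • a ∈ S := by
        by_contra h
        push_neg at h
        exact hnoinf x h
      have hm : ¬ x - Nat.find hex • a ∈ S := Nat.find_spec hex
      have hm0 : Nat.find hex ≠ 0 := by
        intro h0
        apply hm
        rw [h0]
        simpa using hx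
      obtain ⟨n, hn⟩ := Nat.exists_eq_succ_of_ne_zero hm0
      refine ⟨n, ?_⟩
      rw [hL n]
      constructor
      · rw [hmem]
        by_contra h
        exact Nat.find_min hex (hn ▸ Nat.lt_succ_self n) h
      · rw [hmem]
        rw [hn] at hm
        intro h
        apply hm
        convert h using 2
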